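/- For every finite set A ⊆ ℤ^n, #A ≤ 1 + Σ_I #(integer cells contained in cconv(P_I A)), where the sum is over all nonempty subsets I ⊆ {1,...,n}. -/

import Mathlib

/-- The coordinate convex hull of a set `B ⊆ ℤ^I`: all `x` such that for every
sign pattern `θ` there is `y ∈ B` lying on the appropriate side of `x` in
each coordinate. -/
def cconvZ {ι : Type*} (B : Set (ι → ℤ)) : Set (ι → ℤ) :=
  {x | ∀ θ : ι → Bool, ∃ y ∈ B,
    ∀ i, (θ i = true → x i ≤ y i) ∧ (θ i = false → y i ≤ x i)}

/-- The number of integer cells `∏_{i∈I} {a i, a i + 1}` contained in the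
coordinate convex hull of the projection of `A` onto the coordinates in `I`. -/
noncomputable def cellCountZ {n : ℕ} (A : Finset (Fin n → ℤ)) (I : Finset (Fin n)) : ℕ :=
  Set.ncard {a : {i // i ∈ I} → ℤ |
    ∀ c : {i // i ∈ I} → ℤ, (∀ i, c i = a i ∨ c i = a i + 1) →
      c ∈ cconvZ {z : {i // i ∈ I} → ℤ | ∃ x ∈ A, ∀ i : {i // i ∈ I}, x i.1 = z i}}

/-- **Theorem 2.4.** For every finite `A ⊆ ℤ^n`,
`#A ≤ 1 + ∑_I #(integer cells in cconv(P_I A))`, the sum over all nonempty `I`. -/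

def projSetZ {ι : Type*} (A : Finset (ι → ℤ)) (I : Finset ι) : Set ({i // i ∈ I} → ℤ) :=
  {z | ∃ x ∈ A, ∀ i : {i // i ∈ I}, x i.1 = z i}

def cellSetZ {ι : Type*} (B : Set (ι → ℤ)) : Set (ι → ℤ) :=
  {a | ∀ c : ι → ℤ, (∀ i, c i = a i ∨ c i = a i + 1) → c ∈ cconvZ B}

theorem projSetZ_mono {ι : Type*} {A B : Finset (ι → ℤ)} (h : A ⊆ B) (I : Finset ι) :
    projSetZ A I ⊆ projSetZ B I := by
  rintro z ⟨x, hx, hz⟩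
  exact ⟨x, h hx, hz⟩

/-- Extend a function on coords `J` to coords `insert i₀ J` with value `s` at `i₀`. -/
def extFun {ι : Type*} [DecidableEq ι] (i₀ : ι) (J : Finset ι) (a : {j // j ∈ J} → ℤ)
    (s : ℤ) : {j // j ∈ (insert i₀ J : Finset ι)} → ℤ :=
  fun j => if h : j.1 ∈ J then a ⟨j.1, h⟩ else s

theorem claimB {ι : Type*} [DecidableEq ι] (A : Finset (ι → ℤ)) (i₀ : ι) (J : Finset ι)
    (hi₀ : i₀ ∉ J) (t₁ t₂ s : ℤ) (h1 : t₁ ≤ s) (h2 : s + 1 ≤ t₂) (a : {j // j ∈ J} → ℤ)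
    (ha1 : a ∈ cellSetZ (projSetZ (A.filter (fun x => x i₀ = t₁)) J))
    (ha2 : a ∈ cellSetZ (projSetZ (A.filter (fun x => x i₀ = t₂)) J)) :
    extFun i₀ J a s ∈ cellSetZ (projSetZ A (insert i₀ J)) := by
  intro c hc θ
  have hi₀' : i₀ ∈ (insert i₀ J : Finset ι) := Finset.mem_insert_self i₀ J
  set i₀' : {j // j ∈ (insert i₀ J : Finset ι)} := ⟨i₀, hi₀'⟩ with hi₀'def
  -- restrictions to J
  have memJ : ∀ j : {j // j ∈ J}, j.1 ∈ (insert i₀ J : Finset ι) :=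
    fun j => Finset.mem_insert_of_mem j.2
  set c' : {j // j ∈ J} → ℤ := fun j => c ⟨j.1, memJ j⟩ with hc'def
  have hc' : ∀ j : {j // j ∈ J}, c' j = a j ∨ c' j = a j + 1 := by
    intro j
    have := hc ⟨j.1, memJ j⟩
    have he : extFun i₀ J a s ⟨j.1, memJ j⟩ = a j := by
      simp only [extFun, j.2, dif_pos]
    rw [he] at this
    exact this
  -- the value of c at i₀
  have hci₀ : c i₀' = s ∨ c i₀' = s + 1 := by
    have := hc i₀'
    have he : extFun i₀ J a s i₀' = s := by
      simp only [extFun, hi₀'def, dif_neg hi₀]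
    rw [he] at this
    exact this
  -- pick the fiber according to the sign at i₀
  rcases hθ : θ i₀' with _ | _
  · -- θ i₀' = false : use fiber t₁
    obtain ⟨z, hz, hmz⟩ := ha1 c' hc' (fun j => θ ⟨j.1, memJ j⟩)
    obtain ⟨x, hxA, hxz⟩ := hz
    rw [Finset.mem_filter] at hxA
    refine ⟨fun j => x j.1, ⟨x, hxA.1, fun _ => rfl⟩, ?_⟩
    intro i
    by_cases hiJ : i.1 ∈ J
    · have h3 := hmz ⟨i.1, hiJ⟩
      rw [← hxz ⟨i.1, hiJ⟩] at h3
      exact h3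
    · have hii : i = i₀' := Subtype.ext (by
        rcases Finset.mem_insert.mp i.2 with h | h
        · exact h
        · exact absurd h hiJ)
      subst hii
      constructor
      · intro h; rw [hθ] at h; exact absurd h (by simp)
      · intro _
        show x i₀ ≤ c i₀'
        rw [hxA.2]
        rcases hci₀ with h | h <;> rw [h] <;> omega
  · -- θ i₀' = true : use fiber t₂
    obtain ⟨z, hz, hmz⟩ := ha2 c' hc' (fun j => θ ⟨j.1, memJ j⟩)
    obtain ⟨x, hxA, hxz⟩ := hz
    rw [Finset.mem_filter] at hxA
    refine ⟨fun j => x j.1, ⟨x, hxA.1, fun _ => rfl⟩, ?_⟩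
    intro i
    by_cases hiJ : i.1 ∈ J
    · have h3 := hmz ⟨i.1, hiJ⟩
      rw [← hxz ⟨i.1, hiJ⟩] at h3
      exact h3
    · have hii : i = i₀' := Subtype.ext (by
        rcases Finset.mem_insert.mp i.2 with h | h
        · exact h
        · exact absurd h hiJ)
      subst hii
      constructor
      · intro _
        show c i₀' ≤ x i₀
        rw [hxA.2]
        rcases hci₀ with h | h <;> rw [h] <;> omega
      · intro h; rw [hθ] at h; exact absurd h (by simp)

noncomputable def NC {ι : Type*} (A : Finset (ι → ℤ)) (I : Finset ι) : ℕ :=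
  (cellSetZ (projSetZ A I)).ncard

theorem cconvZ_mono {ι : Type*} {B C : Set (ι → ℤ)} (h : B ⊆ C) : cconvZ B ⊆ cconvZ C := by
  intro x hx θ
  obtain ⟨y, hy, hm⟩ := hx θ
  exact ⟨y, h hy, hm⟩

theorem cellSetZ_mono {ι : Type*} {B C : Set (ι → ℤ)} (h : B ⊆ C) : cellSetZ B ⊆ cellSetZ C :=
  fun a ha c hc => cconvZ_mono h (ha c hc)

theorem cellSetZ_subset_cconvZ {ι : Type*} (B : Set (ι → ℤ)) : cellSetZ B ⊆ cconvZ B :=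
  fun a ha => ha a (fun _ => Or.inl rfl)

theorem cconvZ_subset {ι : Type*} (B : Set (ι → ℤ)) :
    cconvZ B ⊆ ⋃ y ∈ B, ⋃ y' ∈ B, Set.Icc y' y := by
  intro x hx
  obtain ⟨y, hy, hm⟩ := hx (fun _ => true)
  obtain ⟨y', hy', hm'⟩ := hx (fun _ => false)
  simp only [Set.mem_iUnion]
  exact ⟨y, hy, y', hy', fun i => (hm' i).2 rfl, fun i => (hm i).1 rfl⟩

theorem cconvZ_finite {ι : Type*} [Fintype ι] [DecidableEq ι] {B : Set (ι → ℤ)}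
    (hB : B.Finite) : (cconvZ B).Finite :=
  Set.Finite.subset (hB.biUnion fun y _ => hB.biUnion fun y' _ => Set.finite_Icc y' y)
    (cconvZ_subset B)

theorem projSetZ_finite {ι : Type*} (A : Finset (ι → ℤ)) (I : Finset ι) :
    (projSetZ A I).Finite := by
  have : projSetZ A I = (fun (x : ι → ℤ) (i : {i // i ∈ I}) => x i.1) '' ↑A := by
    ext z
    constructor
    · rintro ⟨x, hx, h⟩
      exact ⟨x, hx, funext fun i => h i⟩
    · rintro ⟨x, hx, rfl⟩
      exact ⟨x, hx, fun _ => rfl⟩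
  rw [this]
  exact A.finite_toSet.image _

theorem cellSetZ_finite {ι : Type*} [DecidableEq ι] (A : Finset (ι → ℤ)) (I : Finset ι) :
    (cellSetZ (projSetZ A I)).Finite :=
  Set.Finite.subset (cconvZ_finite (projSetZ_finite A I)) (cellSetZ_subset_cconvZ _)

/-- Key lemma: the total number of `J`-cells over the fibers of coordinate `i₀`
is at most the number of `J`-cells plus the number of `insert i₀ J`-cells. -/
theorem key_lemma {ι : Type*} [DecidableEq ι] (A : Finset (ι → ℤ)) (i₀ : ι) (J : Finset ι)
    (hi₀ : i₀ ∉ J) :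
    ∑ t ∈ A.image (fun x => x i₀), NC (A.filter (fun x => x i₀ = t)) J
      ≤ NC A J + NC A (insert i₀ J) := by
  classical
  set T := A.image (fun x => x i₀) with hT
  set Ctf : ℤ → Finset ({j // j ∈ J} → ℤ) :=
    fun t => (cellSetZ_finite (A.filter (fun x => x i₀ = t)) J).toFinset with hCtf
  set Xf := (cellSetZ_finite A J).toFinset with hXf
  set Yf := (cellSetZ_finite A (insert i₀ J)).toFinset with hYf
  have hNC : ∀ t, NC (A.filter (fun x => x i₀ = t)) J = (Ctf t).card := by
    intro t; rw [hCtf]; exact Set.ncard_eq_toFinset_card _ _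
  have hNCX : NC A J = Xf.card := Set.ncard_eq_toFinset_card _ _
  have hNCY : NC A (insert i₀ J) = Yf.card := Set.ncard_eq_toFinset_card _ _
  calc ∑ t ∈ T, NC (A.filter (fun x => x i₀ = t)) J
      = ∑ t ∈ T, (Ctf t).card := by simp_rw [hNC]
    _ = (T.sigma Ctf).card := (Finset.card_sigma T Ctf).symm
    _ ≤ (Xf.disjSum Yf).card := ?_
    _ = Xf.card + Yf.card := Finset.card_disjSum _ _
    _ = NC A J + NC A (insert i₀ J) := by rw [hNCX, hNCY]
  -- the injection
  set Ta : ({j // j ∈ J} → ℤ) → Finset ℤ := fun a => T.filter (fun t => a ∈ Ctf t) with hTa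
  set f : (Σ _ : ℤ, ({j // j ∈ J} → ℤ)) → ({j // j ∈ J} → ℤ) ⊕ ({j // j ∈ (insert i₀ J : Finset ι)} → ℤ) :=
    fun p => if hne : (Ta p.2).Nonempty then
        (if p.1 = (Ta p.2).min' hne then Sum.inl p.2 else Sum.inr (extFun i₀ J p.2 (p.1 - 1)))
      else Sum.inl p.2 with hf
  apply Finset.card_le_card_of_injOn f
  · -- maps into
    rintro ⟨t, a⟩ hp
    rw [Finset.mem_coe, Finset.mem_sigma] at hp
    obtain ⟨htT, haC⟩ := hp
    have htTa : t ∈ Ta a := by rw [hTa]; exact Finset.mem_filter.mpr ⟨htT, haC⟩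
    have hne : (Ta a).Nonempty := ⟨t, htTa⟩
    rw [Finset.mem_coe, Finset.mem_disjSum]
    by_cases hmin : t = (Ta a).min' hne
    · left
      refine ⟨a, ?_⟩
      have : f ⟨t, a⟩ = Sum.inl a := by rw [hf]; simp only [dif_pos hne, if_pos hmin]
      rw [this]
      constructor
      · rw [hXf, Set.Finite.mem_toFinset]
        have haC' : a ∈ cellSetZ (projSetZ (A.filter (fun x => x i₀ = t)) J) := by
          rw [hCtf, Set.Finite.mem_toFinset] at haC; exact haC
        exact cellSetZ_mono (projSetZ_mono (Finset.filter_subset _ _) J) haC'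
      · rfl
    · right
      refine ⟨extFun i₀ J a (t - 1), ?_⟩
      have : f ⟨t, a⟩ = Sum.inr (extFun i₀ J a (t - 1)) := by
        rw [hf]; simp only [dif_pos hne, if_neg hmin]
      rw [this]
      refine ⟨?_, rfl⟩
      rw [hYf, Set.Finite.mem_toFinset]
      set t₁ := (Ta a).min' hne with ht₁
      have ht₁Ta : t₁ ∈ Ta a := (Ta a).min'_mem hne
      have ht₁C : a ∈ Ctf t₁ := (Finset.mem_filter.mp ht₁Ta).2
      have hle : t₁ ≤ t := (Ta a).min'_le t htTa
      have hlt : t₁ ≤ t - 1 := by omega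
      have ha1 : a ∈ cellSetZ (projSetZ (A.filter (fun x => x i₀ = t₁)) J) := by
        rw [hCtf, Set.Finite.mem_toFinset] at ht₁C; exact ht₁C
      have ha2 : a ∈ cellSetZ (projSetZ (A.filter (fun x => x i₀ = t)) J) := by
        rw [hCtf, Set.Finite.mem_toFinset] at haC; exact haC
      exact claimB A i₀ J hi₀ t₁ t (t - 1) hlt (by omega) a ha1 ha2
  · -- injectivity
    rintro ⟨t, a⟩ hp ⟨t', a'⟩ hp' heq
    simp only [Finset.coe_sigma, Set.mem_sigma_iff, Finset.mem_coe] at hp hp'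
    obtain ⟨htT, haC⟩ := hp
    obtain ⟨htT', haC'⟩ := hp'
    have hne : (Ta a).Nonempty := ⟨t, Finset.mem_filter.mpr ⟨htT, haC⟩⟩
    have hne' : (Ta a').Nonempty := ⟨t', Finset.mem_filter.mpr ⟨htT', haC'⟩⟩
    have hfp : f ⟨t, a⟩ = if t = (Ta a).min' hne then Sum.inl a
        else Sum.inr (extFun i₀ J a (t - 1)) := by rw [hf]; simp only [dif_pos hne]
    have hfp' : f ⟨t', a'⟩ = if t' = (Ta a').min' hne' then Sum.inl a'
        else Sum.inr (extFun i₀ J a' (t' - 1)) := by rw [hf]; simp only [dif_pos hne']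
    rw [hfp, hfp'] at heq
    by_cases h1 : t = (Ta a).min' hne <;> by_cases h2 : t' = (Ta a').min' hne'
    · rw [if_pos h1, if_pos h2] at heq
      have haa : a = a' := Sum.inl.inj heq
      subst haa
      have htt : t = t' := by rw [h1, h2]
      subst htt; rfl
    · rw [if_pos h1, if_neg h2] at heq; exact absurd heq (by simp)
    · rw [if_neg h1, if_pos h2] at heq; exact absurd heq (by simp)
    · rw [if_neg h1, if_neg h2] at heq
      have hext : extFun i₀ J a (t - 1) = extFun i₀ J a' (t' - 1) := Sum.inr.inj heq
      have haa : a = a' := by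
        funext j
        have := congrFun hext ⟨j.1, Finset.mem_insert_of_mem j.2⟩
        simpa only [extFun, dif_pos j.2] using this
      have htt : t = t' := by
        have := congrFun hext ⟨i₀, Finset.mem_insert_self i₀ J⟩
        simp only [extFun, dif_neg hi₀] at this
        omega
      subst haa; subst htt; rfl

/-- Column lemma: the number of distinct `i₀`-coordinates is at most `1 + NC A {i₀}`. -/
theorem column_lemma {ι : Type*} [DecidableEq ι] (A : Finset (ι → ℤ)) (i₀ : ι)
    (hA : A.Nonempty) :
    (A.image (fun x => x i₀)).card ≤ 1 + NC A {i₀} := by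
  classical
  set T := A.image (fun x => x i₀) with hT
  have hTne : T.Nonempty := hA.image _
  set m := T.min' hTne with hm
  set M := T.max' hTne with hM
  have hmM : m ≤ M := T.min'_le _ (T.max'_mem hTne)
  -- T.card ≤ M - m + 1
  have hTcard : (T.card : ℤ) ≤ M - m + 1 := by
    have hsub : T ⊆ Finset.Icc m M := fun t ht =>
      Finset.mem_Icc.mpr ⟨T.min'_le t ht, T.le_max' t ht⟩
    have := Finset.card_le_card hsub
    rw [Int.card_Icc] at this
    omega
  -- each constant function s for s ∈ [m, M-1] is a cell
  obtain ⟨xM, hxM, hxMval⟩ := Finset.mem_image.mp (T.max'_mem hTne)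
  obtain ⟨xm, hxm, hxmval⟩ := Finset.mem_image.mp (T.min'_mem hTne)
  have hcell : ∀ s : ℤ, m ≤ s → s ≤ M - 1 →
      (fun _ : {j // j ∈ ({i₀} : Finset ι)} => s) ∈ cellSetZ (projSetZ A {i₀}) := by
    intro s hs1 hs2 c hc θ
    have hmem : i₀ ∈ ({i₀} : Finset ι) := Finset.mem_singleton_self i₀
    have hall : ∀ i : {j // j ∈ ({i₀} : Finset ι)}, i = ⟨i₀, hmem⟩ :=
      fun i => Subtype.ext (Finset.mem_singleton.mp i.2)
    have hc' : c ⟨i₀, hmem⟩ = s ∨ c ⟨i₀, hmem⟩ = s + 1 := hc ⟨i₀, hmem⟩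
    rcases hθ : θ ⟨i₀, hmem⟩ with _ | _
    · refine ⟨fun j => xm j.1, ⟨xm, hxm, fun _ => rfl⟩, ?_⟩
      intro i
      rw [hall i]
      constructor
      · intro h; rw [hθ] at h; exact absurd h (by simp)
      · intro _
        show xm i₀ ≤ c ⟨i₀, hmem⟩
        rcases hc' with h | h <;> rw [h] <;> omega
    · refine ⟨fun j => xM j.1, ⟨xM, hxM, fun _ => rfl⟩, ?_⟩
      intro i
      rw [hall i]
      constructor
      · intro _
        show c ⟨i₀, hmem⟩ ≤ xM i₀
        rcases hc' with h | h <;> rw [h] <;> omega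
      · intro h; rw [hθ] at h; exact absurd h (by simp)
  -- so NC A {i₀} ≥ M - m
  have hNC : (M - m).toNat ≤ NC A {i₀} := by
    have : NC A {i₀} = (cellSetZ_finite A ({i₀} : Finset ι)).toFinset.card :=
      Set.ncard_eq_toFinset_card _ _
    rw [this]
    have := Finset.card_le_card_of_injOn
      (f := fun s : ℤ => (fun _ : {j // j ∈ ({i₀} : Finset ι)} => s))
      (s := Finset.Icc m (M - 1)) (t := (cellSetZ_finite A ({i₀} : Finset ι)).toFinset)
      (fun s hs => by
        rw [Finset.mem_coe, Set.Finite.mem_toFinset]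
        rw [Finset.mem_coe, Finset.mem_Icc] at hs
        exact hcell s hs.1 hs.2)
      (fun s _ s' _ h => congrFun h ⟨i₀, Finset.mem_singleton_self i₀⟩)
    rw [Int.card_Icc] at this
    have h2 : (M - 1 + 1 - m).toNat = (M - m).toNat := by omega
    rw [h2] at this
    exact this
  omega

theorem sum_split {ι : Type*} [DecidableEq ι] (i₀ : ι) (s : Finset ι) (hi₀ : i₀ ∉ s)
    (g : Finset ι → ℕ) :
    ∑ I ∈ (insert i₀ s).powerset.filter (fun I => I.Nonempty), g I
      = g {i₀} + ∑ J ∈ s.powerset.filter (fun J => J.Nonempty), (g J + g (insert i₀ J)) := by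
  classical
  rw [Finset.powerset_insert, Finset.filter_union, Finset.sum_union]
  · have himg : (s.powerset.image (insert i₀)).filter (fun I => I.Nonempty)
        = s.powerset.image (insert i₀) := by
      apply Finset.filter_true_of_mem
      intro I hI
      obtain ⟨J, _, rfl⟩ := Finset.mem_image.mp hI
      exact Finset.insert_nonempty i₀ J
    rw [himg]
    have hinj : ∀ J ∈ s.powerset, ∀ J' ∈ s.powerset, insert i₀ J = insert i₀ J' → J = J' := by
      intro J hJ J' hJ' h
      rw [Finset.mem_powerset] at hJ hJ'
      have hJi : i₀ ∉ J := fun hc => hi₀ (hJ hc)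
      have hJi' : i₀ ∉ J' := fun hc => hi₀ (hJ' hc)
      rw [← Finset.erase_insert hJi, ← Finset.erase_insert hJi', h]
    rw [Finset.sum_image hinj]
    have hsplit : ∑ J ∈ s.powerset, g (insert i₀ J)
        = g {i₀} + ∑ J ∈ s.powerset.filter (fun J => J.Nonempty), g (insert i₀ J) := by
      have h1 : s.powerset = insert ∅ (s.powerset.filter (fun J => J.Nonempty)) := by
        ext J
        simp only [Finset.mem_insert, Finset.mem_filter, Finset.mem_powerset]
        constructor
        · intro hJ
          rcases J.eq_empty_or_nonempty with h | h
          · exact Or.inl h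
          · exact Or.inr ⟨hJ, h⟩
        · rintro (rfl | ⟨h, _⟩)
          · exact Finset.empty_subset s
          · exact h
      nth_rewrite 1 [h1]
      rw [Finset.sum_insert (by simp)]
      have he : (insert i₀ ∅ : Finset ι) = {i₀} := by ext j; simp
      rw [he]
    rw [hsplit, Finset.sum_add_distrib]
    ring
  · refine Finset.disjoint_left.mpr (fun I hI hI' => ?_)
    rw [Finset.mem_filter, Finset.mem_powerset] at hI
    rw [Finset.mem_filter] at hI'
    obtain ⟨J, _, rfl⟩ := Finset.mem_image.mp hI'.1
    exact hi₀ (hI.1 (Finset.mem_insert_self i₀ J))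

theorem main_induction {ι : Type*} [DecidableEq ι] (S : Finset ι) :
    ∀ A : Finset (ι → ℤ), (∀ x ∈ A, ∀ y ∈ A, ∀ i, i ∉ S → x i = y i) →
      A.card ≤ 1 + ∑ I ∈ S.powerset.filter (fun I => I.Nonempty), NC A I := by
  classical
  induction S using Finset.induction_on with
  | empty =>
    intro A hA
    rcases A.eq_empty_or_nonempty with rfl | ⟨x₀, hx₀⟩
    · simp
    · have : A ⊆ {x₀} := fun y hy =>
        Finset.mem_singleton.mpr (funext fun i => hA y hy x₀ hx₀ i (by simp))
      calc A.card ≤ ({x₀} : Finset _).card := Finset.card_le_card this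
        _ = 1 := Finset.card_singleton x₀
        _ ≤ _ := Nat.le_add_right 1 _
  | @insert i₀ s hi₀ ih =>
    intro A hA
    rcases A.eq_empty_or_nonempty with rfl | hAne
    · simp
    set T := A.image (fun x => x i₀) with hT
    have hcard : A.card = ∑ t ∈ T, (A.filter (fun x => x i₀ = t)).card :=
      Finset.card_eq_sum_card_fiberwise (fun x hx => Finset.mem_image_of_mem _ hx)
    have hfiber : ∀ t, (A.filter (fun x => x i₀ = t)).card
        ≤ 1 + ∑ J ∈ s.powerset.filter (fun J => J.Nonempty), NC (A.filter (fun x => x i₀ = t)) J := by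
      intro t
      apply ih
      intro x hx y hy i hi
      rw [Finset.mem_filter] at hx hy
      by_cases hii : i = i₀
      · rw [hii, hx.2, hy.2]
      · exact hA x hx.1 y hy.1 i (by simp [Finset.mem_insert, hii, hi])
    calc A.card = ∑ t ∈ T, (A.filter (fun x => x i₀ = t)).card := hcard
      _ ≤ ∑ t ∈ T, (1 + ∑ J ∈ s.powerset.filter (fun J => J.Nonempty),
            NC (A.filter (fun x => x i₀ = t)) J) := Finset.sum_le_sum (fun t _ => hfiber t)
      _ = T.card + ∑ t ∈ T, ∑ J ∈ s.powerset.filter (fun J => J.Nonempty),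
            NC (A.filter (fun x => x i₀ = t)) J := by
          rw [Finset.sum_add_distrib, Finset.sum_const, smul_eq_mul, mul_one]
      _ = T.card + ∑ J ∈ s.powerset.filter (fun J => J.Nonempty),
            ∑ t ∈ T, NC (A.filter (fun x => x i₀ = t)) J := by rw [Finset.sum_comm]
      _ ≤ (1 + NC A {i₀}) + ∑ J ∈ s.powerset.filter (fun J => J.Nonempty),
            (NC A J + NC A (insert i₀ J)) := by
          apply Nat.add_le_add (column_lemma A i₀ hAne)
          apply Finset.sum_le_sum
          intro J hJ
          rw [Finset.mem_filter, Finset.mem_powerset] at hJ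
          exact key_lemma A i₀ J (fun hc => hi₀ (hJ.1 hc))
      _ = 1 + ∑ I ∈ (insert i₀ s).powerset.filter (fun I => I.Nonempty), NC A I := by
          rw [sum_split i₀ s hi₀ (NC A)]
          ring

theorem card_le_one_add_sum_cellCount (n : ℕ) (A : Finset (Fin n → ℤ)) :
    A.card ≤ 1 + ∑ I ∈ (Finset.univ : Finset (Finset (Fin n))).filter
      (fun I => I.Nonempty), cellCountZ A I := by
  have h := main_induction (Finset.univ : Finset (Fin n)) A
    (fun x _ y _ i hi => absurd (Finset.mem_univ i) hi)
  rw [Finset.powerset_univ] at h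
  exact h
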